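/- Let K be a finite-dimensional complex inner product space, let Π and Λ be orthogonal projections on K, let U = (2Π − I)(2Λ − I), and let Θ ∈ [0, π]. Then for every vector w ∈ K with Λw = 0, one has ‖P_Θ(U) Π w‖ ≤ (Θ/2)·‖w‖. -/

import Mathlib

set_option maxHeartbeats 1000000
noncomputable section
open scoped ComplexInnerProductSpace

/-- The orthogonal projection (as an endomorphism) onto a submodule of a
finite-dimensional complex inner product space. -/
def projL {K : Type*} [NormedAddCommGroup K] [InnerProductSpace ℂ K] [FiniteDimensional ℂ K]
    (S : Submodule ℂ K) : K →ₗ[ℂ] K :=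
  S.subtype ∘ₗ (S.orthogonalProjection).toLinearMap

/-- `phaseSpace U Θ` is the span of the eigenvectors of `U` with eigenvalue `e^{iθ}`
for `|θ| ≤ Θ`; the orthogonal projection onto it is `P_Θ(U)`. -/
def phaseSpace {K : Type*} [NormedAddCommGroup K] [InnerProductSpace ℂ K]
    (U : K →ₗ[ℂ] K) (Θ : ℝ) : Submodule ℂ K :=
  ⨆ θ : Set.Icc (-Θ) Θ, Module.End.eigenspace U (Complex.exp (Complex.I * (θ : ℝ)))


section helperlemmas
variable {K : Type*} [NormedAddCommGroup K] [InnerProductSpace ℂ K] [FiniteDimensional ℂ K]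

lemma projL_mem (S : Submodule ℂ K) (x : K) : projL S x ∈ S := by
  simp [projL]

lemma projL_idem (S : Submodule ℂ K) (x : K) : projL S (projL S x) = projL S x := by
  simp [projL, Submodule.starProjection_eq_self_iff]

lemma projL_sym (S : Submodule ℂ K) (x y : K) : ⟪projL S x, y⟫ = ⟪x, projL S y⟫ := by
  exact Submodule.inner_starProjection_left_eq_right S x y

lemma projL_inner_self (S : Submodule ℂ K) (x : K) :
    ⟪projL S x, x⟫ = ⟪projL S x, projL S x⟫ := by
  have h : ⟪projL S x, x - projL S x⟫ = 0 := by
    have hmem : x - projL S x ∈ Sᗮ := Submodule.sub_starProjection_mem_orthogonal (K := S) x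
    exact (Submodule.mem_orthogonal S _).1 hmem _ (projL_mem S x)
  have := inner_sub_right (𝕜 := ℂ) (projL S x) x (projL S x)
  rw [h] at this
  linear_combination -this

lemma phaseSpace_inv_U (U : K →ₗ[ℂ] K) (Θ : ℝ) :
    ∀ x ∈ phaseSpace U Θ, U x ∈ phaseSpace U Θ := by
  intro x hx
  have : phaseSpace U Θ ≤ (phaseSpace U Θ).comap U := by
    refine iSup_le fun θ => ?_
    intro y hy
    have h := Module.End.mem_eigenspace_iff.1 hy
    have : U y ∈ Module.End.eigenspace U (Complex.exp (Complex.I * (θ : ℝ))) := by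
      rw [h]
      exact Submodule.smul_mem _ _ hy
    exact Submodule.mem_comap.2 (le_iSup (fun θ : Set.Icc (-Θ) Θ =>
      Module.End.eigenspace U (Complex.exp (Complex.I * (θ : ℝ)))) θ this)
  exact this hx

lemma phaseSpace_inv_adj (U Ua : K →ₗ[ℂ] K) (hUaU : ∀ x, Ua (U x) = x) (Θ : ℝ) :
    ∀ x ∈ phaseSpace U Θ, Ua x ∈ phaseSpace U Θ := by
  intro x hx
  have : phaseSpace U Θ ≤ (phaseSpace U Θ).comap Ua := by
    refine iSup_le fun θ => ?_
    intro y hy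
    have h := Module.End.mem_eigenspace_iff.1 hy
    set c := Complex.exp (Complex.I * (θ : ℝ)) with hc
    have hc0 : c ≠ 0 := Complex.exp_ne_zero _
    have hy' : Ua y = c⁻¹ • y := by
      have h1 : Ua (U y) = y := hUaU y
      rw [h, map_smul] at h1
      rw [eq_comm, inv_smul_eq_iff₀ hc0]
      exact h1.symm
    have : Ua y ∈ Module.End.eigenspace U c := by
      rw [hy']
      exact Submodule.smul_mem _ _ hy
    exact Submodule.mem_comap.2 (le_iSup (fun θ : Set.Icc (-Θ) Θ =>
      Module.End.eigenspace U (Complex.exp (Complex.I * (θ : ℝ)))) θ this)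
  exact this hx

lemma claimA (U : K →ₗ[ℂ] K) (hiso : ∀ x y : K, ⟪U x, U y⟫ = ⟪x, y⟫) (Θ : ℝ)
    (x₀ : K) (hx₀V : x₀ ∈ phaseSpace U Θ) (lam : ℂ) (hx₀ : U x₀ = lam • x₀) (hne : x₀ ≠ 0) :
    ∃ θ : ℝ, θ ∈ Set.Icc (-Θ) Θ ∧ lam = Complex.exp (Complex.I * θ) := by
  by_contra hcon
  push_neg at hcon
  have hle : phaseSpace U Θ ≤ (ℂ ∙ x₀)ᗮ := by
    refine iSup_le fun θ => ?_
    intro x hx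
    rw [Submodule.mem_orthogonal_singleton_iff_inner_right]
    have h := Module.End.mem_eigenspace_iff.1 hx
    have h2 := hiso x₀ x
    rw [hx₀, h, inner_smul_left, inner_smul_right] at h2
    have hneq : (starRingEnd ℂ) lam * Complex.exp (Complex.I * (θ : ℝ)) ≠ 1 := by
      intro heq
      apply hcon θ θ.2
      have h3 : (starRingEnd ℂ) lam = (Complex.exp (Complex.I * (θ : ℝ)))⁻¹ :=
        eq_inv_of_mul_eq_one_right (by linear_combination heq)
      have h4 := congrArg (starRingEnd ℂ) h3
      simp only [Complex.conj_conj] at h4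
      rw [h4, map_inv₀, ← Complex.exp_conj, map_mul, Complex.conj_I, Complex.conj_ofReal,
        ← Complex.exp_neg]
      ring_nf
    have hfac : ((starRingEnd ℂ) lam * Complex.exp (Complex.I * (θ : ℝ)) - 1) * (⟪x₀, x⟫) = 0 := by
      linear_combination h2
    rcases mul_eq_zero.1 hfac with h5 | h5
    · exact absurd (by linear_combination h5) hneq
    · exact h5
  have := hle hx₀V
  rw [Submodule.mem_orthogonal_singleton_iff_inner_right] at this
  exact hne (inner_self_eq_zero.1 this)
lemma key (U Ua : K →ₗ[ℂ] K)
    (hadj : ∀ x y : K, ⟪Ua x, y⟫ = ⟪x, U y⟫)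
    (hUaU : ∀ x, Ua (U x) = x) (hUUa : ∀ x, U (Ua x) = x)
    (Θ : ℝ) (hΘ : 0 ≤ Θ) (v : K) (hv : v ∈ phaseSpace U Θ) :
    ‖U v - v‖ ≤ Θ * ‖v‖ := by
  have hiso : ∀ x y : K, ⟪U x, U y⟫ = ⟪x, y⟫ := by
    intro x y
    have := hadj (U x) y
    rw [hUaU] at this
    exact this.symm
  set V := phaseSpace U Θ with hV
  have hUV := phaseSpace_inv_U U Θ
  have hUaV := phaseSpace_inv_adj U Ua hUaU Θ
  set L : V →ₗ[ℂ] V := U.restrict hUV with hL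
  set La : V →ₗ[ℂ] V := Ua.restrict hUaV with hLa
  set B : V →ₗ[ℂ] V := LinearMap.id + LinearMap.id - L - La with hB
  have hLcoe : ∀ x : V, (L x : K) = U x := fun x => rfl
  have hLacoe : ∀ x : V, (La x : K) = Ua x := fun x => rfl
  have hadjV : ∀ x y : V, ⟪La x, y⟫ = ⟪x, L y⟫ := by
    intro x y
    rw [Submodule.coe_inner, Submodule.coe_inner, hLcoe, hLacoe]
    exact hadj x y
  have hadjV' : ∀ x y : V, ⟪L x, y⟫ = ⟪x, La y⟫ := by
    intro x y
    have := hadjV y x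
    have h2 := congrArg (starRingEnd ℂ) this
    rw [inner_conj_symm, inner_conj_symm] at h2
    exact h2.symm
  have hLaL : ∀ x : V, La (L x) = x := fun x => Subtype.ext (hUaU x)
  have hLLa : ∀ x : V, L (La x) = x := fun x => Subtype.ext (hUUa x)
  have hisoV : ∀ x y : V, ⟪L x, L y⟫ = ⟪x, y⟫ := by
    intro x y
    rw [Submodule.coe_inner, Submodule.coe_inner, hLcoe, hLcoe]
    exact hiso x y
  have hBapp : ∀ x : V, B x = x + x - L x - La x := by
    intro x; simp [hB]
  have hBsym : B.IsSymmetric := by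
    intro x y
    rw [hBapp, hBapp]
    simp only [inner_sub_left, inner_sub_right, inner_add_left, inner_add_right]
    have h1 := hadjV x y
    have h2 := hadjV' x y
    linear_combination - h1 - h2
  set n := Module.finrank ℂ V with hn
  have hfr : Module.finrank ℂ V = n := rfl
  set b := hBsym.eigenvectorBasis hfr with hbdef
  set μ := hBsym.eigenvalues hfr with hμdef
  have hμle : ∀ i, μ i ≤ Θ ^ 2 := by
    intro i
    set W : Submodule ℂ V := Module.End.eigenspace B ((μ i : ℂ)) with hW
    have hbW : b i ∈ W := by
      rw [hW, Module.End.mem_eigenspace_iff]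
      exact hBsym.apply_eigenvectorBasis hfr i
    have hbne : b i ≠ 0 := b.toBasis.ne_zero i
    have : Nontrivial W := ⟨⟨b i, hbW⟩, 0, by simp [Subtype.ext_iff, hbne]⟩
    have hcomm : ∀ x : V, B (L x) = L (B x) := by
      intro x
      rw [hBapp, hBapp, map_sub, map_sub, map_add, hLLa, hLaL]
    have hLW : ∀ x ∈ W, L x ∈ W := by
      intro x hx
      rw [hW, Module.End.mem_eigenspace_iff] at hx ⊢
      rw [hcomm, hx, map_smul]
    obtain ⟨lam, hlam⟩ := Module.End.exists_eigenvalue (L.restrict hLW)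
    obtain ⟨u, hu⟩ := hlam.exists_hasEigenvector
    set v₀ : V := (u : V) with hv₀
    have hv₀ne : v₀ ≠ 0 := fun h => hu.2 (Subtype.ext h)
    have hLv₀ : L v₀ = lam • v₀ := by
      have := hu.apply_eq_smul
      have h2 := congrArg (Subtype.val) this
      rwa [LinearMap.restrict_coe_apply] at h2
    have hBv₀ : B v₀ = (μ i : ℂ) • v₀ := Module.End.mem_eigenspace_iff.1 u.2
    have hx₀V : (v₀ : K) ∈ V := v₀.2
    have hx₀ne : (v₀ : K) ≠ 0 := fun h => hv₀ne (Subtype.ext h)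
    have hUx₀ : U (v₀ : K) = lam • (v₀ : K) := by
      have := congrArg (Subtype.val) hLv₀
      rwa [hLcoe] at this
    obtain ⟨θ, hθ, hlameq⟩ := claimA U hiso Θ _ hx₀V lam hUx₀ hx₀ne
    have hlam0 : lam ≠ 0 := by rw [hlameq]; exact Complex.exp_ne_zero _
    have hLav₀ : La v₀ = lam⁻¹ • v₀ := by
      have h1 : La (L v₀) = v₀ := hLaL v₀
      rw [hLv₀, map_smul] at h1
      rw [eq_comm, inv_smul_eq_iff₀ hlam0]
      exact h1.symm
    have hsc : (μ i : ℂ) = 2 - lam - lam⁻¹ := by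
      have h1 : ((μ i : ℂ) - (2 - lam - lam⁻¹)) • v₀ = 0 := by
        rw [sub_smul, ← hBv₀, hBapp, hLv₀, hLav₀]
        module
      rcases smul_eq_zero.1 h1 with h | h
      · linear_combination h
      · exact absurd h hv₀ne
    have hμr : μ i = 2 - 2 * Real.cos θ := by
      have h2 : (μ i : ℂ) = ((2 - 2 * Real.cos θ : ℝ) : ℂ) := by
        rw [hsc, hlameq, ← Complex.exp_neg, mul_comm Complex.I (θ : ℂ)]
        rw [show -((θ : ℂ) * Complex.I) = (-(θ : ℂ)) * Complex.I by ring]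
        rw [Complex.exp_mul_I, Complex.exp_mul_I, Complex.cos_neg, Complex.sin_neg,
          ← Complex.ofReal_cos]
        push_cast
        ring
      exact_mod_cast h2
    have hsin := Real.sin_sq_le_sq (x := θ / 2)
    have hcos : Real.cos θ = 2 * Real.cos (θ / 2) ^ 2 - 1 := by
      have := Real.cos_two_mul (θ / 2)
      rwa [show 2 * (θ / 2) = θ by ring] at this
    have hpyth := Real.sin_sq_add_cos_sq (θ / 2)
    have hθb : -Θ ≤ θ ∧ θ ≤ Θ := hθ
    have e1 : μ i = 4 * Real.sin (θ / 2) ^ 2 := by rw [hμr, hcos]; linarith [hpyth]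
    have e3 : θ ^ 2 ≤ Θ ^ 2 := sq_le_sq' hθb.1 hθb.2
    have e4 : 4 * ((θ / 2) ^ 2) = θ ^ 2 := by ring
    linarith [e1, hsin, e3, e4]
  -- positivity bound
  have hBle : ∀ x : V, Complex.re ⟪B x, x⟫ ≤ Θ ^ 2 * ‖x‖ ^ 2 := by
    intro x
    have h1 : ⟪B x, x⟫ = ∑ i, (starRingEnd ℂ) (b.repr (B x) i) * (b.repr x i) := by
      have hmm := b.repr.inner_map_map (B x) x
      rw [PiLp.inner_apply] at hmm
      simp only [RCLike.inner_apply] at hmm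
      exact hmm.symm.trans (Finset.sum_congr rfl fun _ _ => mul_comm _ _)
    have h2 : ∀ i, b.repr (B x) i = (μ i : ℂ) * b.repr x i := by
      intro i
      exact_mod_cast hBsym.eigenvectorBasis_apply_self_apply hfr x i
    have h3 : ⟪x, x⟫ = ∑ i, (starRingEnd ℂ) (b.repr x i) * (b.repr x i) := by
      have hmm := b.repr.inner_map_map x x
      rw [PiLp.inner_apply] at hmm
      simp only [RCLike.inner_apply] at hmm
      exact hmm.symm.trans (Finset.sum_congr rfl fun _ _ => mul_comm _ _)
    have h4 : ‖x‖ ^ 2 = ∑ i, Complex.normSq (b.repr x i) := by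
      have h3' : RCLike.re (⟪x, x⟫ : ℂ) =
          RCLike.re (∑ i, (starRingEnd ℂ) (b.repr x i) * (b.repr x i)) := by rw [h3]
      rw [inner_self_eq_norm_sq, map_sum] at h3'
      rw [h3']
      congr 1
      ext i
      rw [← Complex.normSq_eq_conj_mul_self]
      simp
    rw [h1, Complex.re_sum]
    calc (∑ i, ((starRingEnd ℂ) (b.repr (B x) i) * b.repr x i).re)
        = ∑ i, μ i * Complex.normSq (b.repr x i) := by
          congr 1; ext i
          rw [h2, map_mul, mul_assoc, ← Complex.normSq_eq_conj_mul_self]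
          simp [Complex.conj_ofReal]
      _ ≤ ∑ i, Θ ^ 2 * Complex.normSq (b.repr x i) := by
          apply Finset.sum_le_sum
          intro i _
          exact mul_le_mul_of_nonneg_right (hμle i) (Complex.normSq_nonneg _)
      _ = Θ ^ 2 * ‖x‖ ^ 2 := by rw [h4, Finset.mul_sum]
  -- norm identity
  have hnormsq : ∀ x : V, ‖L x - x‖ ^ 2 = Complex.re ⟪B x, x⟫ := by
    intro x
    have h1 : ⟪L x - x, L x - x⟫ = ⟪B x, x⟫ := by
      rw [hBapp]
      simp only [inner_sub_left, inner_sub_right, inner_add_left, inner_add_right]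
      have e1 := hisoV x x
      have e2 := hadjV' x x
      have e3 := hadjV x x
      first
      | linear_combination e1 - e3
      | linear_combination e1 + e3
      | linear_combination e1 - e2
      | linear_combination e1 + e2
      | linear_combination e1 + e2 - e3
      | linear_combination e1 - e2 + e3
    rw [← h1, ← inner_self_eq_norm_sq (𝕜 := ℂ) (L x - x)]
    rfl
  -- conclude
  set vt : V := ⟨v, hv⟩ with hvt
  have hcoe : ((L vt - vt : V) : K) = U v - v := by
    simp [hLcoe]
    rfl
  have hnorm1 : ‖U v - v‖ = ‖L vt - vt‖ := by rw [← hcoe]; rfl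
  have hnorm2 : ‖v‖ = ‖vt‖ := rfl
  rw [hnorm1, hnorm2]
  have hsq : ‖L vt - vt‖ ^ 2 ≤ (Θ * ‖vt‖) ^ 2 := by
    rw [hnormsq vt]
    calc Complex.re ⟪B vt, vt⟫ ≤ Θ ^ 2 * ‖vt‖ ^ 2 := hBle vt
      _ = (Θ * ‖vt‖) ^ 2 := by ring
  have h0 : (0:ℝ) ≤ Θ * ‖vt‖ := mul_nonneg hΘ (norm_nonneg _)
  have h5 := Real.sqrt_le_sqrt hsq
  rwa [Real.sqrt_sq (norm_nonneg _), Real.sqrt_sq h0] at h5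

end helperlemmas

/-- **Effective spectral gap lemma.**  If `Π` and `Λ` are orthogonal projections on a
finite-dimensional complex inner product space, `U = (2Π − I)(2Λ − I)`, `Θ ∈ [0, π]`, and
`Λ w = 0`, then `‖P_Θ(U) Π w‖ ≤ (Θ/2)·‖w‖`. -/
theorem effective_spectral_gap
    {K : Type*} [NormedAddCommGroup K] [InnerProductSpace ℂ K] [FiniteDimensional ℂ K]
    (S T : Submodule ℂ K) (Θ : ℝ) (hΘ : Θ ∈ Set.Icc (0 : ℝ) Real.pi)
    (U : K →ₗ[ℂ] K)
    (hU : U = (2 • projL S - LinearMap.id) ∘ₗ (2 • projL T - LinearMap.id))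
    (w : K) (hw : projL T w = 0) :
    ‖projL (phaseSpace U Θ) (projL S w)‖ ≤ (Θ / 2) * ‖w‖ := by

  obtain ⟨hΘ0, hΘpi⟩ := hΘ
  set R1 : K →ₗ[ℂ] K := 2 • projL S - LinearMap.id with hR1
  set R2 : K →ₗ[ℂ] K := 2 • projL T - LinearMap.id with hR2
  have hR1app : ∀ x : K, R1 x = projL S x + projL S x - x := by
    intro x; simp [hR1, two_smul]
  have hR2app : ∀ x : K, R2 x = projL T x + projL T x - x := by
    intro x; simp [hR2, two_smul]
  have hR1sym : ∀ x y : K, ⟪R1 x, y⟫ = ⟪x, R1 y⟫ := by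
    intro x y
    rw [hR1app, hR1app]
    simp only [inner_sub_left, inner_sub_right, inner_add_left, inner_add_right]
    have h := projL_sym S x y
    linear_combination h + h
  have hR2sym : ∀ x y : K, ⟪R2 x, y⟫ = ⟪x, R2 y⟫ := by
    intro x y
    rw [hR2app, hR2app]
    simp only [inner_sub_left, inner_sub_right, inner_add_left, inner_add_right]
    have h := projL_sym T x y
    linear_combination h + h
  have hR1inv : ∀ x : K, R1 (R1 x) = x := by
    intro x
    rw [hR1app, hR1app, map_sub, map_add, projL_idem]
    abel
  have hR2inv : ∀ x : K, R2 (R2 x) = x := by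
    intro x
    rw [hR2app, hR2app, map_sub, map_add, projL_idem]
    abel
  have hUapp : ∀ x : K, U x = R1 (R2 x) := by
    intro x; rw [hU]; rfl
  set Ua : K →ₗ[ℂ] K := R2 ∘ₗ R1 with hUadef
  have hUaapp : ∀ x : K, Ua x = R2 (R1 x) := fun x => rfl
  have hadj : ∀ x y : K, ⟪Ua x, y⟫ = ⟪x, U y⟫ := by
    intro x y
    rw [hUaapp, hUapp, hR2sym, hR1sym]
  have hUaU : ∀ x : K, Ua (U x) = x := by
    intro x; rw [hUapp, hUaapp, hR1inv, hR2inv]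
  have hUUa : ∀ x : K, U (Ua x) = x := by
    intro x; rw [hUaapp, hUapp, hR2inv, hR1inv]
  have hiso : ∀ x y : K, ⟪U x, U y⟫ = ⟪x, y⟫ := by
    intro x y
    have := hadj (U x) y
    rw [hUaU] at this
    exact this.symm
  have hUnorm : ∀ x : K, ‖U x‖ = ‖x‖ := by
    intro x
    have h1 : ‖U x‖ ^ 2 = ‖x‖ ^ 2 := by
      rw [← inner_self_eq_norm_sq (𝕜 := ℂ) (U x), ← inner_self_eq_norm_sq (𝕜 := ℂ) x, hiso]
    have := Real.sqrt_le_sqrt h1.le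
    have h2 := Real.sqrt_le_sqrt h1.ge
    rw [Real.sqrt_sq (norm_nonneg _), Real.sqrt_sq (norm_nonneg _)] at this h2
    exact le_antisymm this h2
  -- step 1 : projL S w = (1/2) (w - U w)
  have hy : (2 : ℂ) • projL S w = w - U w := by
    have h1 : R2 w = -w := by
      rw [hR2app, hw]; simp
    have h2 : U w = w - (projL S w + projL S w) := by
      rw [hUapp, h1, LinearMap.map_neg, hR1app]
      abel
    rw [h2, two_smul]
    abel
  have hPw : projL S w = (2 : ℂ)⁻¹ • (w - U w) := by
    rw [eq_comm, inv_smul_eq_iff₀ (two_ne_zero (α := ℂ))]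
    exact hy.symm
  set V := phaseSpace U Θ with hVdef
  set v : K := projL V (w - U w) with hvdef
  have hvV : v ∈ V := projL_mem V _
  have hgoal : projL V (projL S w) = (2 : ℂ)⁻¹ • v := by
    rw [hPw, map_smul]
  rw [hgoal, norm_smul]
  have hhalf : ‖(2 : ℂ)⁻¹‖ = 2⁻¹ := by simp
  rw [hhalf]
  -- bound ‖v‖ ≤ Θ * ‖w‖
  have hv2 : ‖v‖ ^ 2 = Complex.re ⟪v, w - U w⟫ := by
    have h1 := projL_inner_self V (w - U w)
    rw [← hvdef] at h1
    rw [h1]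
    exact (inner_self_eq_norm_sq (𝕜 := ℂ) v).symm
  have hsplit : ⟪v, w - U w⟫ = ⟪v - Ua v, w⟫ := by
    rw [inner_sub_right, inner_sub_left, hadj]
  have hUv : ‖v - Ua v‖ = ‖U v - v‖ := by
    rw [← hUnorm (v - Ua v), map_sub, hUUa]
  have hkey : ‖U v - v‖ ≤ Θ * ‖v‖ := key U Ua hadj hUaU hUUa Θ hΘ0 v hvV
  have hb : ‖v‖ ^ 2 ≤ Θ * ‖v‖ * ‖w‖ := by
    rw [hv2, hsplit]
    calc Complex.re ⟪v - Ua v, w⟫ ≤ ‖(⟪v - Ua v, w⟫ : ℂ)‖ := Complex.re_le_norm _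
      _ ≤ ‖v - Ua v‖ * ‖w‖ := norm_inner_le_norm _ _
      _ = ‖U v - v‖ * ‖w‖ := by rw [hUv]
      _ ≤ Θ * ‖v‖ * ‖w‖ := by
          have := mul_le_mul_of_nonneg_right hkey (norm_nonneg w)
          linarith
  have hvle : ‖v‖ ≤ Θ * ‖w‖ := by
    rcases eq_or_lt_of_le (norm_nonneg v) with h0 | h0
    · rw [← h0]
      positivity
    · have := (mul_le_mul_iff_left₀ h0).1 (by nlinarith : ‖v‖ * ‖v‖ ≤ (Θ * ‖w‖) * ‖v‖)
      exact this
  calc (2⁻¹ : ℝ) * ‖v‖ ≤ 2⁻¹ * (Θ * ‖w‖) := by linarith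
    _ = Θ / 2 * ‖w‖ := by ring
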